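/- For multiplicative characters A, B, C of F_q, ₂F₁[A,B;C;1] = A(-1)·[B choose ĀC], where [X choose Y] = Y(-1)·J(X,Ȳ). -/

import Mathlib

open Finset

variable {F : Type*} [Field F] [Fintype F] [DecidableEq F]

/-- Finite-field binomial coefficient `[A choose B] = B(-1) * J(A, B⁻¹)`. -/
noncomputable def ffBinom (A B : MulChar F ℂ) : ℂ :=
  B (-1) * jacobiSum A B⁻¹

/-- Finite-field Gauss hypergeometric function
`₂F₁[A,B;C;x] = ε(x)·(BC)(-1)·∑_u B(u)(B̅C)(1-u)A̅(1-ux)`. -/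
noncomputable def ffHyp (A B C : MulChar F ℂ) (x : F) : ℂ :=
  (1 : MulChar F ℂ) x * (B * C) (-1) *
    ∑ u : F, B u * (B⁻¹ * C) (1 - u) * A⁻¹ (1 - u * x)

/-- Finite-field Appell function
`F₁(A;B,B';C;x,y) = ε(xy)·(AC)(-1)·∑_u A(u)(A̅C)(1-u)B̅(1-ux)B̅'(1-uy)`. -/
noncomputable def ffAppellF1 (A B B' C : MulChar F ℂ) (x y : F) : ℂ :=
  (1 : MulChar F ℂ) (x * y) * (A * C) (-1) *
    ∑ u : F, A u * (A⁻¹ * C) (1 - u) * B⁻¹ (1 - u * x) * B'⁻¹ (1 - u * y)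

/-- δ(0)=1, δ(t)=0 otherwise. -/
noncomputable def ffDelta (x : F) : ℂ := if x = 0 then 1 else 0

/-- Reflection identity for Jacobi sums: `J(χ,ψ) = χ(-1)·J(χ,(χψ)⁻¹)`. -/
lemma jacobiSum_reflect (χ ψ : MulChar F ℂ) :
    jacobiSum χ ψ = χ (-1) * jacobiSum χ (χ * ψ)⁻¹ := by
  rw [jacobiSum_eq_sum_sdiff, jacobiSum_eq_sum_sdiff, Finset.mul_sum]
  refine Finset.sum_nbij' (i := fun u => u / (u - 1)) (j := fun v => v / (v - 1))
    ?_ ?_ ?_ ?_ ?_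
  · intro a ha
    simp only [mem_sdiff, mem_univ, mem_insert, mem_singleton, not_or, true_and] at ha ⊢
    have h1 : a - 1 ≠ 0 := sub_ne_zero.mpr ha.2
    refine ⟨div_ne_zero ha.1 h1, fun h => ?_⟩
    rw [div_eq_one_iff_eq h1] at h
    exact one_ne_zero (by linear_combination h)
  · intro a ha
    simp only [mem_sdiff, mem_univ, mem_insert, mem_singleton, not_or, true_and] at ha ⊢
    have h1 : a - 1 ≠ 0 := sub_ne_zero.mpr ha.2
    refine ⟨div_ne_zero ha.1 h1, fun h => ?_⟩
    rw [div_eq_one_iff_eq h1] at h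
    exact one_ne_zero (by linear_combination h)
  · intro a ha
    simp only [mem_sdiff, mem_univ, mem_insert, mem_singleton, not_or, true_and] at ha
    have h1 : a - 1 ≠ 0 := sub_ne_zero.mpr ha.2
    field_simp
    ring
  · intro a ha
    simp only [mem_sdiff, mem_univ, mem_insert, mem_singleton, not_or, true_and] at ha
    have h1 : a - 1 ≠ 0 := sub_ne_zero.mpr ha.2
    field_simp
    ring
  · intro u hu
    simp only [mem_sdiff, mem_univ, mem_insert, mem_singleton, not_or, true_and] at hu
    have h0 : u ≠ 0 := hu.1
    have h1 : (1 : F) - u ≠ 0 := sub_ne_zero.mpr (fun h => hu.2 h.symm)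
    have h1' : u - 1 ≠ 0 := sub_ne_zero.mpr hu.2
    have key : 1 - u / (u - 1) = (1 - u)⁻¹ := by field_simp; ring
    have hx : χ ((u - 1)⁻¹) = (χ (u - 1))⁻¹ := by
      rw [← MulChar.inv_apply', MulChar.inv_apply_eq_inv']
    show χ u * ψ (1 - u) = χ (-1) * (χ (u / (u - 1)) * (χ * ψ)⁻¹ (1 - u / (u - 1)))
    rw [key, MulChar.inv_apply', inv_inv, MulChar.mul_apply,
      div_eq_mul_inv, map_mul, hx, show u - 1 = (-1) * (1 - u) by ring, map_mul]
    have hchi : χ (-1) * χ (-1) = 1 := by rw [← map_mul]; norm_num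
    have hne : χ (1 - u) ≠ 0 := by
      have : χ (1 - u) * χ ((1 - u)⁻¹) = 1 := by
        rw [← map_mul, mul_inv_cancel₀ h1, map_one]
      exact left_ne_zero_of_mul_eq_one this
    have hne1 : χ (-1) ≠ 0 := left_ne_zero_of_mul_eq_one hchi
    field_simp

theorem stmt1 (A B C : MulChar F ℂ) :
    ffHyp A B C (1 : F) = A (-1) * ffBinom B (A⁻¹ * C) := by
  have hsum : ∑ u : F, B u * (B⁻¹ * C) (1 - u) * A⁻¹ (1 - u * 1)
      = jacobiSum B (A⁻¹ * (B⁻¹ * C)) := by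
    rw [jacobiSum]
    refine Finset.sum_congr rfl fun u _ => ?_
    simp only [mul_one, MulChar.mul_apply]
    ring
  have hA : A (-1) * A⁻¹ (-1) = 1 := by
    rw [← MulChar.mul_apply, mul_inv_cancel, MulChar.one_apply (by norm_num)]
  have hB : B (-1) * B (-1) = 1 := by rw [← map_mul]; norm_num
  have hinv : (B * (A⁻¹ * (B⁻¹ * C)))⁻¹ = (A⁻¹ * C)⁻¹ := by
    congr 1
    rw [mul_left_comm, ← mul_assoc B, mul_inv_cancel, one_mul]
  rw [ffHyp, ffBinom, hsum, jacobiSum_reflect B (A⁻¹ * (B⁻¹ * C)), hinv,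
    MulChar.one_apply isUnit_one, MulChar.mul_apply, MulChar.mul_apply]
  linear_combination C (-1) * jacobiSum B (A⁻¹ * C)⁻¹ * hB
    - C (-1) * jacobiSum B (A⁻¹ * C)⁻¹ * hA
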